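/- arXiv:2406.03213 — 5 statements merged into one kernel-verified Lean document; each statement's English description precedes it below -/
import Mathlib

section
/- Let a < b with a,b ∈ [1,∞), let c, k be real constants, and suppose f : (a,b) → ℝ satisfies the first-order linear ODE f(s) + s(s−1)f'(s) = c for all s ∈ (a,b), and additionally (1−s)f(s) → 0 as s → 1⁺ (with 1 in the closure of (a,b)). Then f(s) = c for all s ∈ (a,b). -/
/-- Let `a < b` with `a, b ∈ [1, ∞)`, let `c, k` be real constants, and suppose
`f` is differentiable on `(a, b)` with `f s + s (s − 1) f' s = c` there, and
`(1 − s) f s → 0` as `s → 1⁺` (with `1` in the closure of `(a, b)`).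
Then `f s = c` for all `s ∈ (a, b)`. -/
theorem ode_const_solution (a b c k : ℝ) (ha : 1 ≤ a) (hb : 1 ≤ b) (hab : a < b)
    (f f' : ℝ → ℝ)
    (hder : ∀ s ∈ Set.Ioo a b, HasDerivAt f (f' s) s)
    (hode : ∀ s ∈ Set.Ioo a b, f s + s * (s - 1) * f' s = c)
    (hcl : (1 : ℝ) ∈ closure (Set.Ioo a b))
    (hlim : Filter.Tendsto (fun s => (1 - s) * f s)
      (nhdsWithin 1 (Set.Ioo a b)) (nhds 0)) :
    ∀ s ∈ Set.Ioo a b, f s = c := by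
  have ha1 : a = 1 := by
    rw [closure_Ioo hab.ne] at hcl
    exact le_antisymm hcl.1 ha
  subst ha1
  set h : ℝ → ℝ := fun s => ((1 - s) * f s - c) / s with hh
  -- h has derivative 0 on (1,b)
  have hder0 : ∀ s ∈ Set.Ioo (1:ℝ) b, HasDerivAt h 0 s := by
    intro s hs
    have hs0 : s ≠ 0 := by linarith [hs.1]
    have hu : HasDerivAt (fun s => (1 - s) * f s - c)
        ((-1) * f s + (1 - s) * f' s) s := by
      have := (((hasDerivAt_id s).const_sub 1).mul (hder s hs)).sub_const c
      simpa using this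
    have := (hu.div (hasDerivAt_id s) hs0)
    have hkey : ((-f s + (1 - s) * f' s) * s - ((1 - s) * f s - c)) / s ^ 2 = 0 := by
      have hode' := hode s hs
      field_simp
      nlinarith [hode']
    simpa [hkey, hh, Pi.div_def] using this
  -- h is constant on (1,b)
  have hdiff : DifferentiableOn ℝ h (Set.Ioo (1:ℝ) b) :=
    fun s hs => ((hder0 s hs).differentiableAt).differentiableWithinAt
  have hconst : ∀ x ∈ Set.Ioo (1:ℝ) b, ∀ y ∈ Set.Ioo (1:ℝ) b, h x = h y := by
    intro x hx y hy
    refine (convex_Ioo 1 b).is_const_of_fderivWithin_eq_zero hdiff ?_ hx hy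
    intro z hz
    rw [fderivWithin_of_isOpen isOpen_Ioo hz]
    have : deriv h z = 0 := (hder0 z hz).deriv
    ext
    simp [← toSpanSingleton_deriv, this]
  -- limit of h along 1⁺ is -c
  have hne : (nhdsWithin (1:ℝ) (Set.Ioo 1 b)).NeBot :=
    mem_closure_iff_nhdsWithin_neBot.mp hcl
  have hlim2 : Filter.Tendsto h (nhdsWithin 1 (Set.Ioo (1:ℝ) b)) (nhds (-c)) := by
    have hs1 : Filter.Tendsto (fun s : ℝ => s) (nhdsWithin 1 (Set.Ioo (1:ℝ) b)) (nhds 1) :=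
      Filter.Tendsto.mono_left Filter.tendsto_id nhdsWithin_le_nhds
    have hnum : Filter.Tendsto (fun s => (1 - s) * f s - c)
        (nhdsWithin 1 (Set.Ioo (1:ℝ) b)) (nhds (0 - c)) := hlim.sub_const c
    have := hnum.div hs1 one_ne_zero
    simpa [hh, Pi.div_def] using this
  intro s hs
  have hlim1 : Filter.Tendsto h (nhdsWithin 1 (Set.Ioo (1:ℝ) b)) (nhds (h s)) := by
    refine tendsto_const_nhds.congr' ?_
    filter_upwards [self_mem_nhdsWithin] with y hy
    exact hconst s hs y hy
  have hval : h s = -c := tendsto_nhds_unique hlim1 hlim2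
  have hs0 : s ≠ 0 := by linarith [hs.1]
  have hs1 : (1:ℝ) - s ≠ 0 := by
    have := hs.1; intro hc; linarith
  rw [hh] at hval
  simp only at hval
  have : (1 - s) * f s - c = -c * s := by
    field_simp at hval; linarith
  have h2 : (1 - s) * f s = c * (1 - s) := by ring_nf; ring_nf at this; linarith
  exact mul_left_cancel₀ hs1 (by linarith [h2] : (1 - s) * f s = (1 - s) * c)
end

section
/- Let ρ, σ be positive semidefinite operators on a finite-dimensional Hilbert space, λ ∈ ℝ and s ∈ (0,1). Then tr[σ · {ρ ≥ e^λ σ}] ≤ e^{−λ s} tr[ρ^s σ^{1−s}]. -/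
open scoped ComplexOrder

namespace QIT

variable {d : Type*} [Fintype d] [DecidableEq d]

/-- The orthogonal projection onto the subspace corresponding to the
nonnegative eigenvalues of a Hermitian matrix `A`, i.e. the projection `{A ≥ 0}`. -/
noncomputable def posProj {A : Matrix d d ℂ} (hA : A.IsHermitian) : Matrix d d ℂ :=
  (Matrix.IsHermitian.eigenvectorUnitary hA : Matrix d d ℂ) *
    Matrix.diagonal (fun i => if 0 ≤ hA.eigenvalues i then (1 : ℂ) else 0) *
    star (Matrix.IsHermitian.eigenvectorUnitary hA : Matrix d d ℂ)

/-- The real power `A^s` of a positive semidefinite matrix `A`, with the power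
taken on the support of `A` (eigenvalue `0` is sent to `0` for `s > 0`). -/
noncomputable def mpow {A : Matrix d d ℂ} (hA : A.IsHermitian) (s : ℝ) : Matrix d d ℂ :=
  (Matrix.IsHermitian.eigenvectorUnitary hA : Matrix d d ℂ) *
    Matrix.diagonal (fun i => ((hA.eigenvalues i ^ s : ℝ) : ℂ)) *
    star (Matrix.IsHermitian.eigenvectorUnitary hA : Matrix d d ℂ)

open Matrix Set
set_option linter.unusedSectionVars false
set_option linter.unusedVariables false
set_option maxHeartbeats 1000000

lemma contOn {A : Matrix d d ℂ} (f : ℝ → ℝ) : ContinuousOn f (spectrum ℝ A) := by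
  rw [continuousOn_iff_continuous_restrict]; fun_prop

lemma spec_nonneg {A : Matrix d d ℂ} (hA : A.PosSemidef) : ∀ x ∈ spectrum ℝ A, 0 ≤ x := by
  intro x hx
  rw [Matrix.IsHermitian.spectrum_real_eq_range_eigenvalues hA.isHermitian] at hx
  obtain ⟨i, rfl⟩ := hx
  exact hA.eigenvalues_nonneg i

lemma spec_pos {A : Matrix d d ℂ} (hA : A.PosDef) : ∀ x ∈ spectrum ℝ A, 0 < x := by
  intro x hx
  rw [Matrix.IsHermitian.spectrum_real_eq_range_eigenvalues hA.isHermitian] at hx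
  obtain ⟨i, rfl⟩ := hx
  exact hA.eigenvalues_pos i

section algebra
variable {A : Matrix d d ℂ} (hA : A.IsHermitian)

lemma cfc_mul2 (f g : ℝ → ℝ) :
    cfc (fun x => f x * g x) A = cfc f A * cfc g A := cfc_mul f g A (contOn f) (contOn g)

lemma cfc_mul3 (f g h : ℝ → ℝ) :
    cfc (fun x => f x * g x * h x) A = cfc f A * cfc g A * cfc h A := by
  rw [cfc_mul (fun x => f x * g x) h A (contOn _) (contOn _),
    cfc_mul f g A (contOn _) (contOn _)]

lemma cfc_add' (f g : ℝ → ℝ) :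
    cfc (fun x => f x + g x) A = cfc f A + cfc g A := cfc_add A f g (contOn f) (contOn g)

lemma cfc_sub' (f g : ℝ → ℝ) :
    cfc (fun x => f x - g x) A = cfc f A - cfc g A := cfc_sub f g A (contOn f) (contOn g)

lemma cfc_smul' (r : ℝ) (f : ℝ → ℝ) :
    cfc (fun x => r * f x) A = r • cfc f A := by
  have := cfc_smul (R := ℝ) (A := Matrix d d ℂ) r f A (contOn f)
  simpa [smul_eq_mul] using this

lemma algebraMap_real_eq (u : ℝ) :
    algebraMap ℝ (Matrix d d ℂ) u = (u : ℂ) • (1 : Matrix d d ℂ) := by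
  rw [IsScalarTower.algebraMap_apply ℝ ℂ (Matrix d d ℂ) u, Algebra.algebraMap_eq_smul_one]
  norm_num

include hA in
lemma cfc_add_const (u : ℝ) :
    cfc (fun y : ℝ => y + u) A = A + (u : ℂ) • 1 := by
  have hs : IsSelfAdjoint A := hA
  calc cfc (fun y : ℝ => y + u) A
      = cfc (fun y : ℝ => y) A + cfc (fun _ : ℝ => u) A := cfc_add A _ _ (contOn _) (contOn _)
    _ = A + (u : ℂ) • 1 := by rw [cfc_id' ℝ A, cfc_const u A, algebraMap_real_eq]

end algebra

lemma posSemidef_smul {M : Matrix d d ℂ} (hM : M.PosSemidef) {r : ℝ} (hr : 0 ≤ r) :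
    (r • M).PosSemidef := by
  refine Matrix.PosSemidef.of_dotProduct_mulVec_nonneg ?_ ?_
  · have : (r • M)ᴴ = r • Mᴴ := Matrix.conjTranspose_smul r M
    rw [Matrix.IsHermitian, this, hM.isHermitian.eq]
  · intro x
    have h := hM.dotProduct_mulVec_nonneg x
    have : star x ⬝ᵥ (r • M) *ᵥ x = r • (star x ⬝ᵥ M *ᵥ x) := by
      rw [Matrix.smul_mulVec, dotProduct_smul]
    rw [this]
    exact smul_nonneg hr h

lemma cfc_inv_mul_self {A : Matrix d d ℂ} (hA : A.PosDef) :
    cfc (fun y : ℝ => y⁻¹) A * A = 1 := by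
  have hsa : IsSelfAdjoint A := hA.isHermitian
  have h1 : cfc (fun y : ℝ => y⁻¹ * y) A = cfc (fun y : ℝ => y⁻¹) A * cfc (fun y : ℝ => y) A :=
    cfc_mul2 _ _
  rw [cfc_id' ℝ A] at h1
  rw [← h1, cfc_congr (g := fun _ : ℝ => 1) (fun y hy => by
    show y⁻¹ * y = 1
    exact inv_mul_cancel₀ (spec_pos hA y hy).ne')]
  exact cfc_const_one ℝ A

lemma mul_self_cfc_inv {A : Matrix d d ℂ} (hA : A.PosDef) :
    A * cfc (fun y : ℝ => y⁻¹) A = 1 := by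
  have hsa : IsSelfAdjoint A := hA.isHermitian
  have h1 : cfc (fun y : ℝ => y * y⁻¹) A = cfc (fun y : ℝ => y) A * cfc (fun y : ℝ => y⁻¹) A :=
    cfc_mul2 _ _
  rw [cfc_id' ℝ A] at h1
  rw [← h1, cfc_congr (g := fun _ : ℝ => 1) (fun y hy => by
    show y * y⁻¹ = 1
    exact mul_inv_cancel₀ (spec_pos hA y hy).ne')]
  exact cfc_const_one ℝ A

/-- inverse antitonicity: if `0 < A ≤ B` then `B⁻¹ ≤ A⁻¹`. -/
lemma inv_antitone {A B : Matrix d d ℂ} (hA : A.PosDef) (hB : B.PosDef)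
    (hAB : (B - A).PosSemidef) :
    (cfc (fun y : ℝ => y⁻¹) A - cfc (fun y : ℝ => y⁻¹) B).PosSemidef := by
  have hsaA : IsSelfAdjoint A := hA.isHermitian
  have hsaB : IsSelfAdjoint B := hB.isHermitian
  set W : Matrix d d ℂ := cfc (fun y : ℝ => (Real.sqrt y)⁻¹) A with hW
  set V : Matrix d d ℂ := cfc (fun y : ℝ => Real.sqrt y) A with hV
  have hWherm : W.IsHermitian := cfc_predicate _ A
  have sqrt_ne : ∀ y ∈ spectrum ℝ A, Real.sqrt y ≠ 0 := fun y hy =>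
    (Real.sqrt_pos.mpr (spec_pos hA y hy)).ne'
  have hWV : W * V = 1 := by
    rw [hW, hV, ← cfc_mul2, cfc_congr (g := fun _ : ℝ => 1) (fun y hy => by
      show (Real.sqrt y)⁻¹ * Real.sqrt y = 1
      exact inv_mul_cancel₀ (sqrt_ne y hy))]
    exact cfc_const_one ℝ A
  have hVW : V * W = 1 := by
    rw [hW, hV, ← cfc_mul2, cfc_congr (g := fun _ : ℝ => 1) (fun y hy => by
      show Real.sqrt y * (Real.sqrt y)⁻¹ = 1
      exact mul_inv_cancel₀ (sqrt_ne y hy))]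
    exact cfc_const_one ℝ A
  have hWAW : W * A * W = 1 := by
    have h1 : cfc (fun y : ℝ => (Real.sqrt y)⁻¹ * y * (Real.sqrt y)⁻¹) A
        = W * cfc (fun y : ℝ => y) A * W := cfc_mul3 _ _ _
    rw [cfc_id' ℝ A] at h1
    rw [← h1, cfc_congr (g := fun _ : ℝ => 1) (fun y hy => by
      show (Real.sqrt y)⁻¹ * y * (Real.sqrt y)⁻¹ = 1
      have hy' := spec_pos hA y hy
      rw [mul_comm ((Real.sqrt y)⁻¹) y, mul_assoc, ← mul_inv,
        Real.mul_self_sqrt hy'.le, mul_inv_cancel₀ hy'.ne'])]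
    exact cfc_const_one ℝ A
  have hWW : W * W = cfc (fun y : ℝ => y⁻¹) A := by
    rw [hW, ← cfc_mul2]
    apply cfc_congr
    intro y hy
    show (Real.sqrt y)⁻¹ * (Real.sqrt y)⁻¹ = y⁻¹
    rw [← mul_inv, Real.mul_self_sqrt (spec_pos hA y hy).le]
  set C : Matrix d d ℂ := W * B * W with hC
  have hCherm : C.IsHermitian := by
    rw [Matrix.IsHermitian, hC]
    simp only [Matrix.conjTranspose_mul]
    rw [hWherm.eq, hB.isHermitian.eq, Matrix.mul_assoc]
  have hCsub : (C - 1).PosSemidef := by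
    have h2 : C - 1 = W * (B - A) * Wᴴ := by
      rw [hWherm.eq, hC, ← hWAW]; noncomm_ring
    rw [h2]
    exact hAB.mul_mul_conjTranspose_same W
  have hCpd : C.PosDef := by
    have h3 : C = 1 + (C - 1) := by abel
    rw [h3]
    exact Matrix.PosDef.add_posSemidef Matrix.PosDef.one hCsub
  -- C⁻¹ = V * B⁻¹ * V
  have hCinv : cfc (fun y : ℝ => y⁻¹) C = V * cfc (fun y : ℝ => y⁻¹) B * V := by
    refine left_inv_eq_right_inv (cfc_inv_mul_self hCpd) ?_
    calc C * (V * cfc (fun y : ℝ => y⁻¹) B * V)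
        = W * (B * (cfc (fun y : ℝ => y⁻¹) B)) * V := by
          rw [hC]; rw [show W * B * W * (V * cfc (fun y : ℝ => y⁻¹) B * V)
            = W * B * (W * V) * cfc (fun y : ℝ => y⁻¹) B * V by noncomm_ring, hWV]
          noncomm_ring
      _ = 1 := by rw [mul_self_cfc_inv hB, mul_one, hWV]
  -- 1 - C⁻¹ is PSD
  have hCW : (cfc (fun y : ℝ => (Real.sqrt y)⁻¹) C).IsHermitian := cfc_predicate _ C
  have hkey : (1 - cfc (fun y : ℝ => y⁻¹) C).PosSemidef := by
    set WC : Matrix d d ℂ := cfc (fun y : ℝ => (Real.sqrt y)⁻¹) C with hWC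
    have h4 : WC * (C - 1) * WCᴴ = 1 - cfc (fun y : ℝ => y⁻¹) C := by
      rw [hCW.eq, Matrix.mul_sub, Matrix.sub_mul]
      have hWCC : cfc (fun y : ℝ => (Real.sqrt y)⁻¹ * y * (Real.sqrt y)⁻¹) C
          = WC * cfc (fun y : ℝ => y) C * WC := cfc_mul3 _ _ _
      rw [cfc_id' ℝ C] at hWCC
      have h5 : WC * C * WC = 1 := by
        rw [← hWCC, cfc_congr (g := fun _ : ℝ => 1) (fun y hy => by
          show (Real.sqrt y)⁻¹ * y * (Real.sqrt y)⁻¹ = 1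
          have hy' := spec_pos hCpd y hy
          rw [mul_comm ((Real.sqrt y)⁻¹) y, mul_assoc, ← mul_inv,
            Real.mul_self_sqrt hy'.le, mul_inv_cancel₀ hy'.ne'])]
        exact cfc_const_one ℝ C
      have h6 : WC * 1 * WC = cfc (fun y : ℝ => y⁻¹) C := by
        rw [mul_one, hWC, ← cfc_mul2]
        apply cfc_congr
        intro y hy
        show (Real.sqrt y)⁻¹ * (Real.sqrt y)⁻¹ = y⁻¹
        rw [← mul_inv, Real.mul_self_sqrt (spec_pos hCpd y hy).le]
      rw [h5, h6]
    rw [← h4]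
    exact hCsub.mul_mul_conjTranspose_same WC
  -- conjugate back by W
  have final : cfc (fun y : ℝ => y⁻¹) A - cfc (fun y : ℝ => y⁻¹) B
      = W * (1 - cfc (fun y : ℝ => y⁻¹) C) * Wᴴ := by
    rw [hWherm.eq, Matrix.mul_sub, Matrix.sub_mul, mul_one, hWW, hCinv]
    congr 1
    rw [show W * (V * cfc (fun y : ℝ => y⁻¹) B * V) * W
      = (W * V) * cfc (fun y : ℝ => y⁻¹) B * (V * W) by noncomm_ring, hWV, hVW]
    rw [one_mul, mul_one]
  rw [final]
  exact hkey.mul_mul_conjTranspose_same W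


lemma isSelfAdjoint_of_isHermitian {A : Matrix d d ℂ} (hA : A.IsHermitian) : IsSelfAdjoint A := hA

lemma cfc_isHermitian {A : Matrix d d ℂ} (hA : A.IsHermitian) (f : ℝ → ℝ) :
    (cfc f A).IsHermitian := cfc_predicate f A

lemma cfc_posSemidef {A : Matrix d d ℂ} (hA : A.IsHermitian) {f : ℝ → ℝ}
    (hf : ∀ x ∈ spectrum ℝ A, 0 ≤ f x) : (cfc f A).PosSemidef := by
  rw [hA.cfc_eq, Matrix.IsHermitian.cfc, Unitary.conjStarAlgAut_apply]
  rw [Matrix.star_eq_conjTranspose]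
  apply Matrix.PosSemidef.mul_mul_conjTranspose_same
  apply Matrix.PosSemidef.diagonal
  intro i
  have := hf _ (hA.eigenvalues_mem_spectrum_real i)
  simpa using this

lemma trace_cfc' {A : Matrix d d ℂ} (hA : A.IsHermitian) (f : ℝ → ℝ) :
    (cfc f A).trace = ((∑ i, f (hA.eigenvalues i) : ℝ) : ℂ) := by
  rw [hA.cfc_eq, Matrix.IsHermitian.cfc, Unitary.conjStarAlgAut_apply, Matrix.trace_mul_cycle]
  rw [Unitary.star_mul_self_of_mem (SetLike.coe_mem _), one_mul, Matrix.trace_diagonal]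
  push_cast
  rfl


noncomputable def evec {A : Matrix d d ℂ} (hA : A.IsHermitian) (x : d → ℂ) : d → ℂ :=
  star (hA.eigenvectorUnitary : Matrix d d ℂ) *ᵥ x

lemma dotProduct_cfc {A : Matrix d d ℂ} (hA : A.IsHermitian) (f : ℝ → ℝ) (x : d → ℂ) :
    star x ⬝ᵥ (cfc f A) *ᵥ x
      = ((∑ i, f (hA.eigenvalues i) * Complex.normSq (evec hA x i) : ℝ) : ℂ) := by
  simp only [evec]
  rw [hA.cfc_eq, Matrix.IsHermitian.cfc, Unitary.conjStarAlgAut_apply]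
  set U : Matrix d d ℂ := (hA.eigenvectorUnitary : Matrix d d ℂ) with hU
  set D : Matrix d d ℂ := Matrix.diagonal (RCLike.ofReal ∘ f ∘ hA.eigenvalues) with hD
  have h1 : (U * D * star U) *ᵥ x = U *ᵥ (D *ᵥ (star U *ᵥ x)) := by
    simp [Matrix.mulVec_mulVec, Matrix.mul_assoc]
  rw [h1]
  have h2 : star x ⬝ᵥ (U *ᵥ (D *ᵥ (star U *ᵥ x)))
      = star (star U *ᵥ x) ⬝ᵥ (D *ᵥ (star U *ᵥ x)) := by
    rw [Matrix.dotProduct_mulVec]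
    congr 1
    rw [Matrix.star_mulVec, Matrix.star_eq_conjTranspose, Matrix.conjTranspose_conjTranspose]
  rw [h2]
  rw [dotProduct]
  push_cast
  apply Finset.sum_congr rfl
  intro i _
  rw [hD, Matrix.mulVec_diagonal, Pi.star_apply]
  have := Complex.mul_conj ((star U *ᵥ x) i)
  have h3 : (starRingEnd ℂ) ((star U *ᵥ x) i) * (star U *ᵥ x) i
      = (Complex.normSq ((star U *ᵥ x) i) : ℂ) := by
    rw [mul_comm]; exact this
  calc star ((star U *ᵥ x) i) * ((RCLike.ofReal : ℝ → ℂ) (f (hA.eigenvalues i)) * (star U *ᵥ x) i)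
      = ((f (hA.eigenvalues i) : ℂ)) * ((starRingEnd ℂ) ((star U *ᵥ x) i) * (star U *ᵥ x) i) := by
        rw [Complex.star_def]
        have hco : (RCLike.ofReal : ℝ → ℂ) = Complex.ofReal := rfl
        rw [hco]; ring
    _ = _ := by rw [h3]

lemma posSemidef_trace_nonneg {A : Matrix d d ℂ} (hA : A.PosSemidef) : 0 ≤ A.trace := by
  rw [Matrix.trace]
  apply Finset.sum_nonneg
  intro i _
  have := hA.dotProduct_mulVec_nonneg (Pi.single i 1)
  simpa [dotProduct, Matrix.mulVec, Pi.single_apply] using this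

lemma trace_mul_nonneg {A B : Matrix d d ℂ} (hA : A.PosSemidef) (hB : B.PosSemidef) :
    0 ≤ ((A * B).trace) := by
  open scoped MatrixOrder in obtain ⟨C, rfl⟩ := CStarAlgebra.nonneg_iff_eq_star_mul_self.mp hB.nonneg
  rw [Matrix.star_eq_conjTranspose]
  have h : A * (Cᴴ * C) = A * Cᴴ * C := by rw [Matrix.mul_assoc]
  rw [h, Matrix.trace_mul_cycle]
  exact posSemidef_trace_nonneg (hA.mul_mul_conjTranspose_same C)

lemma trace_mul_re_nonneg {A B : Matrix d d ℂ} (hA : A.PosSemidef) (hB : B.PosSemidef) :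
    0 ≤ ((A * B).trace).re := by
  have := trace_mul_nonneg hA hB
  rw [Complex.le_def] at this
  simpa using this.1

lemma smul_one_posDef {u : ℝ} (hu : 0 < u) : ((u:ℂ) • (1 : Matrix d d ℂ)).PosDef := by
  have h1 : (u:ℂ) • (1 : Matrix d d ℂ) = Matrix.diagonal (fun _ => (u:ℂ)) := by
    ext i j
    by_cases h : i = j <;> simp [Matrix.one_apply, Matrix.diagonal_apply, h]
  rw [h1, Matrix.posDef_diagonal_iff]
  intro i
  exact_mod_cast hu

lemma shift_posDef {A : Matrix d d ℂ} (hA : A.PosSemidef) {u : ℝ} (hu : 0 < u) :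
    (A + (u:ℂ) • 1).PosDef := Matrix.PosDef.posSemidef_add hA (smul_one_posDef hu)

/-- `cfc (fun y => (y + u)⁻¹) A` is the inverse of `A + u•1`, expressed as a `cfc` of the
shifted matrix. -/
lemma cfc_shift_inv {A : Matrix d d ℂ} (hA : A.PosSemidef) {u : ℝ} (hu : 0 < u) :
    cfc (fun y : ℝ => (y + u)⁻¹) A = cfc (fun y : ℝ => y⁻¹) (A + (u:ℂ) • 1) := by
  have hsa : IsSelfAdjoint A := hA.isHermitian
  have hshift : A + (u:ℂ) • 1 = cfc (fun y : ℝ => y + u) A := (cfc_add_const hA.isHermitian u).symm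
  refine left_inv_eq_right_inv ?_ (mul_self_cfc_inv (shift_posDef hA hu))
  rw [hshift, ← cfc_mul2, cfc_congr (g := fun _ : ℝ => 1) (fun y hy => by
    show (y + u)⁻¹ * (y + u) = 1
    have : 0 < y + u := by have := spec_nonneg hA y hy; linarith
    exact inv_mul_cancel₀ this.ne')]
  exact cfc_const_one ℝ A

/-- `x ↦ x/(x+u)` as cfc, in terms of shifted inverse. -/
lemma cfc_ratio_eq {A : Matrix d d ℂ} (hA : A.PosSemidef) {u : ℝ} (hu : 0 < u) :
    cfc (fun y : ℝ => y / (y + u)) A = 1 - u • cfc (fun y : ℝ => (y + u)⁻¹) A := by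
  have hsa : IsSelfAdjoint A := hA.isHermitian
  have h1 : cfc (fun y : ℝ => (1 : ℝ) - u * (y + u)⁻¹) A
      = cfc (fun _ : ℝ => (1:ℝ)) A - cfc (fun y : ℝ => u * (y + u)⁻¹) A := cfc_sub' _ _
  rw [cfc_congr (g := fun y : ℝ => (1:ℝ) - u * (y+u)⁻¹) (fun y hy => by
    show y / (y + u) = 1 - u * (y + u)⁻¹
    have hyu : 0 < y + u := by have := spec_nonneg hA y hy; linarith
    field_simp
    ring)]
  rw [h1, cfc_const_one ℝ A, cfc_smul' _ _]

/-- Monotonicity of the resolvent-type function `x ↦ x/(x+u)`. -/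
lemma ratio_mono {A B : Matrix d d ℂ} (hA : A.PosSemidef) (hB : B.PosSemidef)
    (hAB : (B - A).PosSemidef) {u : ℝ} (hu : 0 < u) :
    (cfc (fun y : ℝ => y / (y + u)) B - cfc (fun y : ℝ => y / (y + u)) A).PosSemidef := by
  have key : (cfc (fun y : ℝ => y⁻¹) (A + (u:ℂ) • 1)
      - cfc (fun y : ℝ => y⁻¹) (B + (u:ℂ) • 1)).PosSemidef := by
    apply inv_antitone (shift_posDef hA hu) (shift_posDef hB hu)
    have : B + (u:ℂ) • 1 - (A + (u:ℂ) • 1) = B - A := by abel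
    rw [this]
    exact hAB
  rw [cfc_ratio_eq hA hu, cfc_ratio_eq hB hu, cfc_shift_inv hA hu, cfc_shift_inv hB hu]
  have h2 : (1 : Matrix d d ℂ) - u • cfc (fun y : ℝ => y⁻¹) (B + (u:ℂ) • 1)
      - (1 - u • cfc (fun y : ℝ => y⁻¹) (A + (u:ℂ) • 1))
      = u • (cfc (fun y : ℝ => y⁻¹) (A + (u:ℂ) • 1)
        - cfc (fun y : ℝ => y⁻¹) (B + (u:ℂ) • 1)) := by
    rw [smul_sub]; abel
  rw [h2]
  exact posSemidef_smul key hu.le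
section scalarIntegral
open MeasureTheory

variable {t : ℝ}

lemma ker_contOn {lam : ℝ} (hlam : 0 ≤ lam) :
    ContinuousOn (fun u : ℝ => u ^ (t-1) * (lam / (lam + u))) (Ioi 0) := by
  apply ContinuousOn.mul
  · intro u hu
    exact (Real.continuousAt_rpow_const u (t-1) (Or.inl (ne_of_gt hu))).continuousWithinAt
  · apply ContinuousOn.div continuousOn_const
      ((continuous_const.add continuous_id).continuousOn)
    intro u hu
    have : (0:ℝ) < u := hu
    show lam + u ≠ 0
    exact ne_of_gt (by linarith)

lemma ker_integrableOn (ht : t ∈ Set.Ioo (0:ℝ) 1) {lam : ℝ} (hlam : 0 ≤ lam) :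
    IntegrableOn (fun u : ℝ => u ^ (t-1) * (lam / (lam + u))) (Ioi 0) := by
  obtain ⟨ht0, ht1⟩ := ht
  have hm : AEStronglyMeasurable (fun u : ℝ => u ^ (t-1) * (lam / (lam + u)))
      (volume.restrict (Ioi (0:ℝ))) :=
    (ker_contOn hlam).aestronglyMeasurable measurableSet_Ioi
  have hsplit : Ioi (0:ℝ) = Ioc (0:ℝ) 1 ∪ Ioi 1 := (Set.Ioc_union_Ioi_eq_Ioi zero_le_one).symm
  rw [hsplit]
  apply MeasureTheory.IntegrableOn.union
  · -- on (0,1] dominated by u^(t-1)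
    have hg : IntegrableOn (fun u : ℝ => u ^ (t-1)) (Ioc (0:ℝ) 1) :=
      (intervalIntegral.intervalIntegrable_rpow' (by linarith)).1
    apply MeasureTheory.Integrable.mono hg (hm.mono_set (by rw [hsplit]; exact subset_union_left))
    rw [ae_restrict_iff' measurableSet_Ioc]
    apply Filter.Eventually.of_forall
    intro u hu
    have hu0 : (0:ℝ) < u := hu.1
    have hlu : (0:ℝ) < lam + u := by linarith
    rw [Real.norm_eq_abs, Real.norm_eq_abs, abs_mul]
    have h1 : |lam / (lam + u)| ≤ 1 := by
      rw [abs_of_nonneg (by positivity)]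
      apply div_le_one_of_le₀ (by linarith) hlu.le
    calc |u ^ (t-1)| * |lam / (lam + u)| ≤ |u ^ (t-1)| * 1 := by
          apply mul_le_mul_of_nonneg_left h1 (abs_nonneg _)
      _ = |u ^ (t-1)| := mul_one _
  · -- on (1,∞) dominated by lam * u^(t-2)
    have hg : IntegrableOn (fun u : ℝ => lam * u ^ (t-2)) (Ioi (1:ℝ)) :=
      (integrableOn_Ioi_rpow_of_lt (by linarith) one_pos).const_mul lam
    apply MeasureTheory.Integrable.mono hg (hm.mono_set (by rw [hsplit]; exact subset_union_right))
    rw [ae_restrict_iff' measurableSet_Ioi]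
    apply Filter.Eventually.of_forall
    intro u hu
    have hu1 : (1:ℝ) < u := hu
    have hu0 : (0:ℝ) < u := by linarith
    have hlu : (0:ℝ) < lam + u := by linarith
    rw [Real.norm_eq_abs, Real.norm_eq_abs]
    rw [abs_of_nonneg (by positivity), abs_of_nonneg (by positivity)]
    have key : u ^ (t-1) * (lam / (lam + u)) = lam * u ^ (t-2) * (u / (lam + u)) := by
      have e : t - 1 = (t-2) + 1 := by ring
      rw [e, Real.rpow_add_one hu0.ne']
      field_simp
    rw [key]
    have h2 : u / (lam + u) ≤ 1 := div_le_one_of_le₀ (by linarith) hlu.le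
    calc lam * u ^ (t-2) * (u / (lam + u)) ≤ lam * u ^ (t-2) * 1 := by
          apply mul_le_mul_of_nonneg_left h2 (by positivity)
      _ = lam * u ^ (t-2) := mul_one _

lemma ker_integral_eq (ht : t ∈ Set.Ioo (0:ℝ) 1) {lam : ℝ} (hlam : 0 ≤ lam) :
    ∫ u in Ioi (0:ℝ), u ^ (t-1) * (lam / (lam + u))
      = lam ^ t * ∫ u in Ioi (0:ℝ), u ^ (t-1) * (1 / (1 + u)) := by
  rcases eq_or_lt_of_le hlam with h0 | h0
  · have : (fun u : ℝ => u ^ (t-1) * (lam / (lam + u))) = fun _ => (0:ℝ) := by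
      funext u; rw [← h0]; simp
    rw [this]
    simp [← h0, Real.zero_rpow (ne_of_gt ht.1)]
  · have hcv := MeasureTheory.integral_comp_mul_left_Ioi
      (fun u : ℝ => u ^ (t-1) * (lam / (lam + u))) 0 h0
    rw [mul_zero] at hcv
    have hcongr : ∫ x in Ioi (0:ℝ), (lam * x) ^ (t-1) * (lam / (lam + lam * x))
        = ∫ x in Ioi (0:ℝ), lam ^ (t-1) * (x ^ (t-1) * (1 / (1 + x))) := by
      apply setIntegral_congr_fun measurableSet_Ioi
      intro x hx
      have hx0 : (0:ℝ) < x := hx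
      show (lam * x) ^ (t-1) * (lam / (lam + lam * x))
          = lam ^ (t-1) * (x ^ (t-1) * (1 / (1 + x)))
      rw [Real.mul_rpow hlam hx0.le]
      have : lam / (lam + lam * x) = 1 / (1 + x) := by
        rw [show lam + lam * x = lam * (1 + x) by ring]
        rw [div_eq_div_iff (by positivity) (by positivity)]
        ring
      rw [this]
      ring
    rw [hcongr] at hcv
    rw [MeasureTheory.integral_const_mul] at hcv
    -- hcv : lam^(t-1) * ∫ = lam⁻¹ • ∫ f
    have := hcv.symm
    rw [smul_eq_mul] at this
    have h2 : ∫ u in Ioi (0:ℝ), u ^ (t-1) * (lam / (lam + u))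
        = lam * (lam ^ (t-1) * ∫ x in Ioi (0:ℝ), x ^ (t-1) * (1 / (1 + x))) := by
      rw [← this]
      field_simp
      congr 1; funext x; ring
    rw [h2, ← mul_assoc]
    congr 1
    rw [mul_comm, ← Real.rpow_add_one h0.ne' (t-1)]
    norm_num

lemma ker_integral_pos (ht : t ∈ Set.Ioo (0:ℝ) 1) :
    0 < ∫ u in Ioi (0:ℝ), u ^ (t-1) * (1 / (1 + u)) := by
  rw [MeasureTheory.setIntegral_pos_iff_support_of_nonneg_ae]
  · apply lt_of_lt_of_le _ (measure_mono (?_ :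
      Ioi (0:ℝ) ⊆ Function.support (fun u : ℝ => u ^ (t-1) * (1 / (1 + u))) ∩ Ioi 0))
    · rw [Real.volume_Ioi]
      exact ENNReal.zero_lt_top
    · intro u hu
      have hu0 : (0:ℝ) < u := hu
      refine ⟨?_, hu⟩
      have h1 : 0 < u ^ (t-1) * (1 / (1 + u)) := by positivity
      exact h1.ne'
  · filter_upwards [MeasureTheory.ae_restrict_mem measurableSet_Ioi] with u hu
    have hu0 : (0:ℝ) < u := hu
    simp only [Pi.zero_apply]
    positivity
  · exact ker_integrableOn ht zero_le_one

end scalarIntegral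
section loewner
open MeasureTheory

/-- Integral representation of the quadratic form of `Y^t`. -/
lemma qf_integral {Y : Matrix d d ℂ} (hY : Y.PosSemidef) (x : d → ℂ) {t : ℝ}
    (ht : t ∈ Set.Ioo (0:ℝ) 1) :
    IntegrableOn (fun u : ℝ => u^(t-1) * ∑ i, (hY.isHermitian.eigenvalues i
        / (hY.isHermitian.eigenvalues i + u)) * Complex.normSq (evec hY.isHermitian x i)) (Ioi 0)
    ∧ ∫ u in Ioi 0, u^(t-1) * ∑ i, (hY.isHermitian.eigenvalues i
        / (hY.isHermitian.eigenvalues i + u)) * Complex.normSq (evec hY.isHermitian x i)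
      = (∑ i, (hY.isHermitian.eigenvalues i) ^ t * Complex.normSq (evec hY.isHermitian x i))
          * ∫ u in Ioi 0, u^(t-1) * (1/(1+u)) := by
  set lam := hY.isHermitian.eigenvalues with hlamdef
  set c : d → ℝ := fun i => Complex.normSq (evec hY.isHermitian x i) with hcdef
  have hlam : ∀ i, 0 ≤ lam i := fun i => hY.eigenvalues_nonneg i
  have hc : ∀ i, 0 ≤ c i := fun i => Complex.normSq_nonneg _
  have hfun : (fun u : ℝ => u^(t-1) * ∑ i, (lam i / (lam i + u)) * c i)
      = fun u : ℝ => ∑ i, c i * (u^(t-1) * (lam i / (lam i + u))) := by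
    funext u
    rw [Finset.mul_sum]
    apply Finset.sum_congr rfl
    intro i _
    ring
  have hint : ∀ i : d, IntegrableOn
      (fun u : ℝ => c i * (u^(t-1) * (lam i / (lam i + u)))) (Ioi 0) :=
    fun i => (ker_integrableOn ht (hlam i)).const_mul (c i)
  constructor
  · rw [hfun]
    exact integrable_finset_sum _ (fun i _ => hint i)
  · rw [hfun, MeasureTheory.integral_finset_sum _ (fun i _ => hint i)]
    have : ∀ i : d, ∫ u in Ioi (0:ℝ), c i * (u^(t-1) * (lam i / (lam i + u)))
        = c i * ((lam i) ^ t * ∫ u in Ioi (0:ℝ), u^(t-1) * (1/(1+u))) := by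
      intro i
      rw [MeasureTheory.integral_const_mul, ker_integral_eq ht (hlam i)]
    rw [Finset.sum_congr rfl (fun i _ => this i), Finset.sum_mul]
    apply Finset.sum_congr rfl
    intro i _
    ring

/-- Löwner–Heinz: `x ↦ x^t` is operator monotone on PSD matrices for `t ∈ (0,1)`. -/
lemma rpow_loewner {A B : Matrix d d ℂ} (hA : A.PosSemidef) (hB : B.PosSemidef)
    (hAB : (B - A).PosSemidef) {t : ℝ} (ht : t ∈ Set.Ioo (0:ℝ) 1) :
    (cfc (fun y : ℝ => y ^ t) B - cfc (fun y : ℝ => y ^ t) A).PosSemidef := by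
  have hsaA : IsSelfAdjoint A := hA.isHermitian
  have hsaB : IsSelfAdjoint B := hB.isHermitian
  refine Matrix.PosSemidef.of_dotProduct_mulVec_nonneg ?_ ?_
  · exact Matrix.IsHermitian.sub (cfc_predicate _ B) (cfc_predicate _ A)
  · intro x
    rw [Matrix.sub_mulVec, dotProduct_sub,
      dotProduct_cfc hB.isHermitian (fun y : ℝ => y ^ t) x,
      dotProduct_cfc hA.isHermitian (fun y : ℝ => y ^ t) x,
      ← Complex.ofReal_sub]
    rw [Complex.zero_le_real]
    rw [sub_nonneg]
    -- real inequality
    have hI := ker_integral_pos (t := t) ht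
    have hqA := qf_integral hA x ht
    have hqB := qf_integral hB x ht
    set SA := ∑ i, (hA.isHermitian.eigenvalues i) ^ t
        * Complex.normSq (evec hA.isHermitian x i) with hSA
    set SB := ∑ i, (hB.isHermitian.eigenvalues i) ^ t
        * Complex.normSq (evec hB.isHermitian x i) with hSB
    have key : 0 ≤ ∫ u in Ioi (0:ℝ),
        ((fun u : ℝ => u^(t-1) * ∑ i, (hB.isHermitian.eigenvalues i
          / (hB.isHermitian.eigenvalues i + u)) * Complex.normSq (evec hB.isHermitian x i)) u
        - (fun u : ℝ => u^(t-1) * ∑ i, (hA.isHermitian.eigenvalues i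
          / (hA.isHermitian.eigenvalues i + u)) * Complex.normSq (evec hA.isHermitian x i)) u) := by
      apply MeasureTheory.setIntegral_nonneg measurableSet_Ioi
      intro u hu
      have hu0 : (0:ℝ) < u := hu
      simp only
      rw [← mul_sub]
      apply mul_nonneg (Real.rpow_nonneg hu0.le _)
      rw [sub_nonneg]
      -- use ratio_mono
      have hr := (ratio_mono hA hB hAB hu0).dotProduct_mulVec_nonneg x
      rw [Matrix.sub_mulVec, dotProduct_sub,
        dotProduct_cfc hB.isHermitian (fun y : ℝ => y / (y + u)) x,
        dotProduct_cfc hA.isHermitian (fun y : ℝ => y / (y + u)) x,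
        ← Complex.ofReal_sub, Complex.zero_le_real, sub_nonneg] at hr
      exact hr
    rw [MeasureTheory.integral_sub hqB.1 hqA.1, hqB.2, hqA.2] at key
    nlinarith [key, hI]

end loewner
lemma mpow_eq {A : Matrix d d ℂ} (hA : A.IsHermitian) (s : ℝ) :
    mpow hA s = cfc (fun y : ℝ => y ^ s) A := by
  have h : (fun i => ((hA.eigenvalues i ^ s : ℝ) : ℂ))
      = (RCLike.ofReal ∘ (fun y : ℝ => y ^ s) ∘ hA.eigenvalues) := by
    funext i
    simp [Function.comp]
  rw [hA.cfc_eq, Matrix.IsHermitian.cfc, Unitary.conjStarAlgAut_apply, mpow, h]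

lemma posProj_eq {A : Matrix d d ℂ} (hA : A.IsHermitian) :
    posProj hA = cfc (fun y : ℝ => if 0 ≤ y then (1:ℝ) else 0) A := by
  have h : (fun i => if 0 ≤ hA.eigenvalues i then (1:ℂ) else 0)
      = (RCLike.ofReal ∘ (fun y : ℝ => if 0 ≤ y then (1:ℝ) else 0) ∘ hA.eigenvalues) := by
    funext i
    simp [Function.comp, apply_ite]
  rw [hA.cfc_eq, Matrix.IsHermitian.cfc, Unitary.conjStarAlgAut_apply, posProj, h]

lemma coe_smul_eq {σ : Matrix d d ℂ} (c : ℝ) : (c:ℂ) • σ = c • σ := by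
  ext i j
  simp [Complex.real_smul]

lemma mpow_smul {σ : Matrix d d ℂ} (hσ : σ.PosSemidef) {c t : ℝ} (hc : 0 < c) (ht : 0 < t) :
    cfc (fun y : ℝ => y ^ t) ((c:ℂ) • σ) = (c ^ t : ℝ) • cfc (fun y : ℝ => y ^ t) σ := by
  have hsa : IsSelfAdjoint σ := hσ.isHermitian
  have hcont : Continuous (fun y : ℝ => y ^ t) :=
    continuous_iff_continuousAt.mpr (fun y => Real.continuousAt_rpow_const y t (Or.inr ht.le))
  rw [coe_smul_eq]
  rw [← cfc_comp_smul c (fun y : ℝ => y ^ t) σ (hcont.continuousOn) hsa]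
  have h1 : cfc (fun y : ℝ => (c • y) ^ t) σ = cfc (fun y : ℝ => c ^ t * y ^ t) σ := by
    apply cfc_congr
    intro y hy
    show (c • y) ^ t = c ^ t * y ^ t
    rw [smul_eq_mul, Real.mul_rpow hc.le (spec_nonneg hσ y hy)]
  rw [h1, cfc_smul' _ _]

/-- Let `ρ, σ ≥ 0`, `λ ∈ ℝ`, `s ∈ (0,1)`.  Then
`tr[σ {ρ ≥ e^λ σ}] ≤ e^{−λ s} tr[ρ^s σ^{1−s}]`, where `{ρ ≥ e^λ σ}` is the
projection onto the nonnegative eigenspace of `ρ − e^λ σ`. -/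
theorem trace_mul_posProj_le (ρ σ : Matrix d d ℂ)
    (hρ : ρ.PosSemidef) (hσ : σ.PosSemidef)
    (lam s : ℝ) (hs : s ∈ Set.Ioo (0 : ℝ) 1)
    (hH : (ρ - ((Real.exp lam : ℝ) : ℂ) • σ).IsHermitian) :
    (σ * posProj hH).trace.re
      ≤ Real.exp (-lam * s) *
        (mpow hρ.isHermitian s * mpow hσ.isHermitian (1 - s)).trace.re := by
  obtain ⟨hs0, hs1⟩ := hs
  set c : ℝ := Real.exp lam with hc
  have hc0 : 0 < c := Real.exp_pos lam
  set X : Matrix d d ℂ := ρ - (c:ℂ) • σ with hX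
  set χ : ℝ → ℝ := fun y => if 0 ≤ y then 1 else 0 with hχ
  have hsaX : IsSelfAdjoint X := hH
  set P : Matrix d d ℂ := cfc χ X with hPdef
  have hP : posProj hH = P := posProj_eq hH
  set Xp : Matrix d d ℂ := cfc (fun y : ℝ => max y 0) X with hXpdef
  set B : Matrix d d ℂ := (c:ℂ) • σ with hB
  set M : Matrix d d ℂ := B + Xp with hM
  -- basic PSD facts
  have hPpsd : P.PosSemidef := cfc_posSemidef hH (fun y _ => by
    dsimp [χ]; split <;> norm_num)
  have hXppsd : Xp.PosSemidef := cfc_posSemidef hH (fun y _ => le_max_right _ _)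
  have hBpsd : B.PosSemidef := by rw [hB, coe_smul_eq]; exact posSemidef_smul hσ hc0.le
  have hMpsd : M.PosSemidef := hBpsd.add hXppsd
  have h1mP : ((1:Matrix d d ℂ) - P).PosSemidef := by
    have h0 : cfc (fun y : ℝ => 1 - χ y) X = 1 - P := by
      rw [cfc_sub' _ _, cfc_const_one ℝ X]
    rw [← h0]
    exact cfc_posSemidef hH (fun y _ => by dsimp [χ]; split <;> norm_num)
  have hXP : X * P = Xp := by
    have h1 : cfc (fun y : ℝ => y * χ y) X = cfc (fun y : ℝ => y) X * cfc χ X := cfc_mul2 _ _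
    rw [cfc_id' ℝ X] at h1
    rw [← h1]
    apply cfc_congr
    intro y _
    show y * χ y = max y 0
    dsimp [χ]
    rcases le_or_gt 0 y with h | h
    · simp [h, max_eq_left h]
    · simp [not_le.mpr h, max_eq_right h.le]
  have hMρ : (M - ρ).PosSemidef := by
    have h2 : M - ρ = cfc (fun y : ℝ => max y 0 - y) X := by
      rw [cfc_sub' _ _, cfc_id' ℝ X]
      rw [hM, hXpdef, hX, hB]
      abel
    rw [h2]
    exact cfc_posSemidef hH (fun y _ => by simp [sub_nonneg, le_max_left])
  have hMB : (M - B).PosSemidef := by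
    have : M - B = Xp := by rw [hM]; abel
    rw [this]; exact hXppsd
  -- powers
  set ρs : Matrix d d ℂ := cfc (fun y : ℝ => y ^ s) ρ with hρs
  set ρt : Matrix d d ℂ := cfc (fun y : ℝ => y ^ (1-s)) ρ with hρt
  set Ms : Matrix d d ℂ := cfc (fun y : ℝ => y ^ s) M with hMs
  set Mt : Matrix d d ℂ := cfc (fun y : ℝ => y ^ (1-s)) M with hMt
  set Bs : Matrix d d ℂ := cfc (fun y : ℝ => y ^ s) B with hBs'
  set Bt : Matrix d d ℂ := cfc (fun y : ℝ => y ^ (1-s)) B with hBt'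
  set σt : Matrix d d ℂ := cfc (fun y : ℝ => y ^ (1-s)) σ with hσt
  have hs' : (1-s) ∈ Set.Ioo (0:ℝ) 1 := ⟨by linarith, by linarith⟩
  have hsIoo : s ∈ Set.Ioo (0:ℝ) 1 := ⟨hs0, hs1⟩
  have psd_pow : ∀ {Y : Matrix d d ℂ} (hY : Y.PosSemidef) (t : ℝ),
      (cfc (fun y : ℝ => y ^ t) Y).PosSemidef := fun hY t =>
    cfc_posSemidef hY.isHermitian (fun y hy => Real.rpow_nonneg (spec_nonneg hY y hy) _)
  have hρs_psd : ρs.PosSemidef := psd_pow hρ s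
  have hBt_psd : Bt.PosSemidef := psd_pow hBpsd (1-s)
  have L1 : (Mt - ρt).PosSemidef := rpow_loewner hρ hMpsd hMρ hs'
  have L2 : (Ms - ρs).PosSemidef := rpow_loewner hρ hMpsd hMρ hsIoo
  have L3 : (Mt - Bt).PosSemidef := rpow_loewner hBpsd hMpsd hMB hs'
  have L4 : (Ms - Bs).PosSemidef := rpow_loewner hBpsd hMpsd hMB hsIoo
  have mulid : ∀ {Y : Matrix d d ℂ}, Y.PosSemidef →
      cfc (fun y : ℝ => y ^ s) Y * cfc (fun y : ℝ => y ^ (1-s)) Y = Y := by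
    intro Y hY
    have hsa : IsSelfAdjoint Y := hY.isHermitian
    have h1 : cfc (fun y : ℝ => y ^ s * y ^ (1-s)) Y
        = cfc (fun y : ℝ => y ^ s) Y * cfc (fun y : ℝ => y ^ (1-s)) Y := cfc_mul2 _ _
    rw [← h1]
    have h2 : cfc (fun y : ℝ => y ^ s * y ^ (1-s)) Y = cfc (fun y : ℝ => y) Y := by
      apply cfc_congr
      intro y hy
      show y ^ s * y ^ (1-s) = y
      rw [← Real.rpow_add' (spec_nonneg hY y hy) (by linarith : s + (1-s) ≠ 0)]
      have e : s + (1-s) = 1 := by ring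
      rw [e, Real.rpow_one]
    rw [h2, cfc_id' ℝ Y]
  have tρ : (ρs * ρt).trace.re = ρ.trace.re := by rw [hρs, hρt, mulid hρ]
  have tM : (Ms * Mt).trace.re = M.trace.re := by rw [hMs, hMt, mulid hMpsd]
  have tB : (Bs * Bt).trace.re = B.trace.re := by rw [hBs', hBt', mulid hBpsd]
  have n1 : 0 ≤ ((ρs * (Mt - ρt)).trace).re := trace_mul_re_nonneg hρs_psd L1
  have n2 : 0 ≤ (((Ms - ρs) * (Mt - Bt)).trace).re := trace_mul_re_nonneg L2 L3
  have n3 : 0 ≤ (((Ms - Bs) * Bt).trace).re := trace_mul_re_nonneg L4 hBt_psd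
  simp only [Matrix.mul_sub, Matrix.sub_mul, Matrix.trace_sub, Complex.sub_re] at n1 n2 n3
  have step5 : ρ.trace.re ≤ M.trace.re - B.trace.re + ((ρs * Bt).trace).re := by
    linarith [n1, n2, n3, tρ, tM, tB]
  -- trace chain for the lhs
  have htr2 : ((X * P).trace).re = Xp.trace.re := by rw [hXP]
  have htr3 : ((ρ * P).trace).re ≤ ρ.trace.re := by
    have h4 := trace_mul_re_nonneg hρ h1mP
    have e : ρ * (1 - P) = ρ - ρ * P := by rw [Matrix.mul_sub, Matrix.mul_one]
    rw [e, Matrix.trace_sub, Complex.sub_re] at h4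
    linarith
  have htr1 : c * ((σ * P).trace).re = ((ρ * P).trace).re - ((X * P).trace).re := by
    have e2 : ρ * P - X * P = B * P := by
      rw [← Matrix.sub_mul, hX, hB]
      congr 1
      abel
    have e1 : ((B * P).trace).re = c * ((σ * P).trace).re := by
      rw [hB, smul_mul_assoc, Matrix.trace_smul, smul_eq_mul, Complex.mul_re]
      simp
    rw [← e1, ← e2, Matrix.trace_sub, Complex.sub_re]
  have main1 : c * ((σ * P).trace).re ≤ ρ.trace.re - Xp.trace.re := by
    rw [htr1, htr2]
    linarith
  have tMB : M.trace.re - B.trace.re = Xp.trace.re := by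
    rw [hM, Matrix.trace_add, Complex.add_re]
    ring
  -- step 7: rescale B powers to σ powers
  have hBt_smul : Bt = (c ^ (1-s) : ℝ) • σt := by
    rw [hBt', hB, hσt, mpow_smul hσ hc0 (by linarith : (0:ℝ) < 1 - s)]
  have t7 : ((ρs * Bt).trace).re = c ^ (1-s) * ((ρs * σt).trace).re := by
    rw [hBt_smul, mul_smul_comm, Matrix.trace_smul]
    rw [Complex.real_smul, Complex.mul_re]
    simp
  have main2 : ρ.trace.re - Xp.trace.re ≤ c ^ (1-s) * ((ρs * σt).trace).re := by
    rw [← t7]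
    linarith [step5, tMB]
  -- final computation
  have hexp : c⁻¹ * c ^ (1-s) = Real.exp (-lam * s) := by
    rw [← Real.rpow_neg_one c, ← Real.rpow_add hc0]
    rw [Real.rpow_def_of_pos hc0, hc, Real.log_exp]
    congr 1
    ring
  have poweq : (mpow hρ.isHermitian s * mpow hσ.isHermitian (1-s)).trace.re
      = ((ρs * σt).trace).re := by
    rw [mpow_eq, mpow_eq, hρs, hσt]
  rw [hP, poweq]
  calc ((σ * P).trace).re = c⁻¹ * (c * ((σ * P).trace).re) := by field_simp
    _ ≤ c⁻¹ * (ρ.trace.re - Xp.trace.re) := by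
        apply mul_le_mul_of_nonneg_left main1 (by positivity)
    _ ≤ c⁻¹ * (c ^ (1-s) * ((ρs * σt).trace).re) := by
        apply mul_le_mul_of_nonneg_left main2 (by positivity)
    _ = Real.exp (-lam * s) * ((ρs * σt).trace).re := by rw [← mul_assoc, hexp]

end QIT
end

section
/- For a bipartite state ρ_{AB}, define α̂ₙ(μ) with alternative hypothesis {σ⊗τ : σ permutation-invariant state on A^⊗n, τ permutation-invariant state on B^⊗n}, and α̂ₙ'(μ) with alternative hypothesis {σ⊗τ : σ permutation-invariant state on A^⊗n, τ arbitrary state on B^n}. Then α̂ₙ(μ) = α̂ₙ'(μ) for all μ ∈ [0,∞). -/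
open scoped BigOperators ComplexOrder

namespace QIT

variable {α β : Type*} [Fintype α] [DecidableEq α] [Fintype β] [DecidableEq β]

/-- A quantum state: positive semidefinite with unit trace. -/
def IsState (ρ : Matrix α α ℂ) : Prop := ρ.PosSemidef ∧ ρ.trace = 1

/-- A test: an operator `T` with `0 ≤ T ≤ 1`. -/
def IsTest (T : Matrix α α ℂ) : Prop := T.PosSemidef ∧ (1 - T).PosSemidef

/-- Tensor (Kronecker) product of two operators. -/
def prodMat (σ : Matrix α α ℂ) (τ : Matrix β β ℂ) : Matrix (α × β) (α × β) ℂ :=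
  fun x y => σ x.1 y.1 * τ x.2 y.2

/-- `n`-fold tensor power of an operator. -/
def tensorPow (ρ : Matrix α α ℂ) (n : ℕ) : Matrix (Fin n → α) (Fin n → α) ℂ :=
  fun x y => ∏ i, ρ (x i) (y i)

/-- `n`-fold tensor power of a bipartite operator, indices grouped as `Aⁿ × Bⁿ`. -/
def bipartitePow (ρ : Matrix (α × β) (α × β) ℂ) (n : ℕ) :
    Matrix ((Fin n → α) × (Fin n → β)) ((Fin n → α) × (Fin n → β)) ℂ :=
  fun x y => ∏ i, ρ (x.1 i, x.2 i) (y.1 i, y.2 i)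

/-- Permutation invariance of an operator on an `n`-fold tensor power. -/
def PermInvariant {n : ℕ} (σ : Matrix (Fin n → α) (Fin n → α) ℂ) : Prop :=
  ∀ π : Equiv.Perm (Fin n), ∀ x y, σ (x ∘ π) (y ∘ π) = σ x y


/-- Minimum type-I error with alternative hypothesis
`{σ ⊗ τ : σ, τ permutation-invariant states}`. -/
noncomputable def alphaHatSym (ρ : Matrix (α × β) (α × β) ℂ) (n : ℕ) (μ : ℝ) : ℝ :=
  sInf {r : ℝ |
    ∃ T : Matrix ((Fin n → α) × (Fin n → β)) ((Fin n → α) × (Fin n → β)) ℂ,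
      IsTest T ∧
      (∀ (σ : Matrix (Fin n → α) (Fin n → α) ℂ) (τ : Matrix (Fin n → β) (Fin n → β) ℂ),
        IsState σ → PermInvariant σ → IsState τ → PermInvariant τ →
          ((prodMat σ τ) * T).trace.re ≤ μ) ∧
      r = ((bipartitePow ρ n) * (1 - T)).trace.re}

/-- Minimum type-I error with alternative hypothesis
`{σ ⊗ τ : σ permutation-invariant state, τ arbitrary state}`. -/
noncomputable def alphaHatSymA (ρ : Matrix (α × β) (α × β) ℂ) (n : ℕ) (μ : ℝ) : ℝ :=
  sInf {r : ℝ |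
    ∃ T : Matrix ((Fin n → α) × (Fin n → β)) ((Fin n → α) × (Fin n → β)) ℂ,
      IsTest T ∧
      (∀ (σ : Matrix (Fin n → α) (Fin n → α) ℂ) (τ : Matrix (Fin n → β) (Fin n → β) ℂ),
        IsState σ → PermInvariant σ → IsState τ →
          ((prodMat σ τ) * T).trace.re ≤ μ) ∧
      r = ((bipartitePow ρ n) * (1 - T)).trace.re}

/-! ### Auxiliary material for the symmetrization argument -/

section AuxLemmas

/-- Positive semidefiniteness is preserved by scaling with a nonnegative real. -/
lemma aux_psd_smul {ι : Type*} [Fintype ι] {M : Matrix ι ι ℂ} (hM : M.PosSemidef) (c : ℝ)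
    (hc : 0 ≤ c) : ((c : ℂ) • M).PosSemidef := by
  constructor
  · unfold Matrix.IsHermitian
    rw [Matrix.conjTranspose_smul, hM.1.eq]
    congr 1
    simp
  · intro x
    exact (hM.smul (a := (c : ℂ)) (by exact_mod_cast Complex.zero_le_real.mpr hc)).2 x

/-- A finite sum of positive semidefinite matrices is positive semidefinite. -/
lemma aux_psd_sum {ι κ : Type*} [Fintype ι] [DecidableEq κ] (s : Finset κ)
    (f : κ → Matrix ι ι ℂ) (hf : ∀ k ∈ s, (f k).PosSemidef) : (∑ k ∈ s, f k).PosSemidef := by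
  induction s using Finset.induction with
  | empty => simpa using Matrix.PosSemidef.zero
  | insert _ _ h ih =>
    rw [Finset.sum_insert h]
    exact ((hf _ (Finset.mem_insert_self _ _)).add
      (ih fun k hk => hf k (Finset.mem_insert_of_mem hk)))

lemma aux_trace_mul_submatrix {ι : Type*} [Fintype ι] [DecidableEq ι] (e : ι ≃ ι)
    (A B : Matrix ι ι ℂ) :
    (A * B.submatrix e e).trace = (A.submatrix e.symm e.symm * B).trace := by
  simp only [Matrix.trace, Matrix.diag, Matrix.mul_apply, Matrix.submatrix_apply]
  exact Fintype.sum_equiv e _ _ fun x => Fintype.sum_equiv e _ _ fun y => by simp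

lemma aux_trace_submatrix_equiv {ι : Type*} [Fintype ι] (e : ι ≃ ι) (A : Matrix ι ι ℂ) :
    (A.submatrix e e).trace = A.trace := by
  simp only [Matrix.trace, Matrix.diag, Matrix.submatrix_apply]
  exact Equiv.sum_comp e fun x => A x x

variable {n : ℕ}

/-- Precomposition with a permutation, as an equivalence of `Fin n → γ`. -/
def pA {γ : Type*} (π : Equiv.Perm (Fin n)) : (Fin n → γ) ≃ (Fin n → γ) :=
  Equiv.arrowCongr π.symm (Equiv.refl γ)

@[simp] lemma pA_apply {γ : Type*} (π : Equiv.Perm (Fin n)) (x : Fin n → γ) :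
    pA π x = x ∘ π := rfl

/-- Simultaneous precomposition on both factors. -/
def pAB (π : Equiv.Perm (Fin n)) :
    ((Fin n → α) × (Fin n → β)) ≃ ((Fin n → α) × (Fin n → β)) :=
  (pA π).prodCongr (pA π)

@[simp] lemma pAB_apply (π : Equiv.Perm (Fin n)) (x : (Fin n → α) × (Fin n → β)) :
    pAB π x = (x.1 ∘ π, x.2 ∘ π) := rfl

lemma pAB_symm (π : Equiv.Perm (Fin n)) :
    (pAB (α := α) (β := β) π).symm = pAB π.symm := rfl

lemma permInvariant_submatrix {σ : Matrix (Fin n → α) (Fin n → α) ℂ}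
    (hσ : PermInvariant σ) (π : Equiv.Perm (Fin n)) :
    σ.submatrix (pA π) (pA π) = σ := by
  ext x y
  exact hσ π x y

lemma prodMat_submatrix (σ : Matrix (Fin n → α) (Fin n → α) ℂ)
    (τ : Matrix (Fin n → β) (Fin n → β) ℂ) (π : Equiv.Perm (Fin n)) :
    (prodMat σ τ).submatrix (pAB π) (pAB π)
      = prodMat (σ.submatrix (pA π) (pA π)) (τ.submatrix (pA π) (pA π)) := rfl

lemma bipartitePow_submatrix (ρ : Matrix (α × β) (α × β) ℂ) (π : Equiv.Perm (Fin n)) :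
    (bipartitePow ρ n).submatrix (pAB π) (pAB π) = bipartitePow ρ n := by
  ext x y
  simp only [Matrix.submatrix_apply, pAB_apply, bipartitePow, Function.comp_apply]
  exact Equiv.prod_comp π fun i => ρ (x.1 i, x.2 i) (y.1 i, y.2 i)

lemma prodMat_smul (σ : Matrix (Fin n → α) (Fin n → α) ℂ)
    (τ : Matrix (Fin n → β) (Fin n → β) ℂ) (c : ℂ) :
    prodMat σ (c • τ) = c • prodMat σ τ := by
  ext x y
  simp only [prodMat, Matrix.smul_apply, smul_eq_mul]
  ring

lemma prodMat_sum {κ : Type*} [DecidableEq κ] (σ : Matrix (Fin n → α) (Fin n → α) ℂ)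
    (s : Finset κ) (τ : κ → Matrix (Fin n → β) (Fin n → β) ℂ) :
    prodMat σ (∑ k ∈ s, τ k) = ∑ k ∈ s, prodMat σ (τ k) := by
  ext x y
  simp only [prodMat, Matrix.sum_apply, Finset.mul_sum]

end AuxLemmas

/-- The minimum type-I errors with alternative hypotheses symmetric on both
subsystems, resp. symmetric only on `Aⁿ`, coincide: `α̂ₙ(μ) = α̂ₙ'(μ)` for all
`μ ∈ [0, ∞)`. -/
theorem alphaHatSym_eq_alphaHatSymA (ρ : Matrix (α × β) (α × β) ℂ)
    (hρ : IsState ρ) (n : ℕ) (μ : ℝ) (hμ : 0 ≤ μ) :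
    alphaHatSym ρ n μ = alphaHatSymA ρ n μ := by
  unfold alphaHatSym alphaHatSymA
  congr 1
  ext r
  constructor
  · -- hard direction: symmetrize the test
    rintro ⟨T, hT, hcon, hr⟩
    set G := Equiv.Perm (Fin n)
    set N : ℕ := Fintype.card G with hN
    have hNpos : 0 < (N : ℝ) := by positivity
    set c : ℝ := (N : ℝ)⁻¹ with hc
    have hc0 : 0 ≤ c := by positivity
    have hcN : (c : ℂ) * (N : ℂ) = 1 := by
      rw [hc]
      push_cast
      field_simp
      exact div_self (Nat.cast_ne_zero.mpr Fintype.card_ne_zero)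
    -- the symmetrized test
    set T' : Matrix ((Fin n → α) × (Fin n → β)) ((Fin n → α) × (Fin n → β)) ℂ :=
      (c : ℂ) • ∑ π : G, T.submatrix (pAB π) (pAB π) with hT'
    have hone : ∑ π : G, (1 : Matrix ((Fin n → α) × (Fin n → β))
        ((Fin n → α) × (Fin n → β)) ℂ).submatrix (pAB π) (pAB π) = (N : ℂ) • 1 := by
      simp [Matrix.submatrix_one_equiv, Finset.sum_const, hN, Nat.cast_smul_eq_nsmul ℂ]
    have hsub : (1 : Matrix ((Fin n → α) × (Fin n → β))
        ((Fin n → α) × (Fin n → β)) ℂ) - T'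
        = (c : ℂ) • ∑ π : G, (1 - T).submatrix (pAB π) (pAB π) := by
      have : ∑ π : G, ((1 : Matrix ((Fin n → α) × (Fin n → β))
          ((Fin n → α) × (Fin n → β)) ℂ) - T).submatrix (pAB π) (pAB π)
          = (N : ℂ) • 1 - ∑ π : G, T.submatrix (pAB π) (pAB π) := by
        rw [← hone, ← Finset.sum_sub_distrib]
        exact Finset.sum_congr rfl fun π _ => rfl
      rw [this, smul_sub, ← hT', smul_smul, hcN, one_smul]
    refine ⟨T', ⟨?_, ?_⟩, ?_, ?_⟩
    · exact aux_psd_smul (aux_psd_sum _ _ fun π _ => hT.1.submatrix _) c hc0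
    · rw [hsub]
      exact aux_psd_smul (aux_psd_sum _ _ fun π _ => hT.2.submatrix _) c hc0
    · -- the constraint for arbitrary τ
      intro σ τ hσ hσp hτ
      -- the symmetrized τ
      set τbar : Matrix (Fin n → β) (Fin n → β) ℂ :=
        (c : ℂ) • ∑ π : G, τ.submatrix (pA π) (pA π) with hτbar
      have hτbar_state : IsState τbar := by
        constructor
        · exact aux_psd_smul (aux_psd_sum _ _ fun π _ => hτ.1.submatrix _) c hc0
        · rw [hτbar, Matrix.trace_smul, Matrix.trace_sum]
          have : ∀ π : G, (τ.submatrix (pA π) (pA π)).trace = 1 := fun π => by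
            rw [aux_trace_submatrix_equiv, hτ.2]
          rw [Finset.sum_congr rfl fun π _ => this π]
          simp [hN, hcN]
          exact hcN
      have hτbar_perm : PermInvariant τbar := by
        intro π' x y
        simp only [hτbar, Matrix.smul_apply, Matrix.sum_apply, Matrix.submatrix_apply,
          pA_apply, smul_eq_mul]
        congr 1
        refine Fintype.sum_equiv (Equiv.mulLeft π') _ _ fun π => ?_
        have h1 : (x ∘ ⇑π') ∘ ⇑π = x ∘ ⇑(π' * π) := rfl
        have h2 : (y ∘ ⇑π') ∘ ⇑π = y ∘ ⇑(π' * π) := rfl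
        rw [h1, h2]
        rfl
      have key : ((prodMat σ τ) * T').trace = ((prodMat σ τbar) * T).trace := by
        rw [hT', Matrix.mul_smul, Matrix.trace_smul, Matrix.mul_sum, Matrix.trace_sum]
        have step : ∀ π : G, ((prodMat σ τ) * T.submatrix (pAB π) (pAB π)).trace
            = ((prodMat σ (τ.submatrix (pA π.symm) (pA π.symm))) * T).trace := fun π => by
          rw [aux_trace_mul_submatrix, pAB_symm, prodMat_submatrix,
            permInvariant_submatrix hσp]
        rw [Finset.sum_congr rfl fun π _ => step π]
        have reindex : ∑ π : G, ((prodMat σ (τ.submatrix (pA π.symm) (pA π.symm))) * T).trace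
            = ∑ π : G, ((prodMat σ (τ.submatrix (pA π) (pA π))) * T).trace := by
          refine Fintype.sum_equiv (Equiv.inv G) _ _ fun π => ?_
          rfl
        rw [reindex, hτbar, prodMat_smul, prodMat_sum, Matrix.smul_mul, Matrix.sum_mul,
          Matrix.trace_smul, Matrix.trace_sum]
      rw [key]
      exact hcon σ τbar hσ hσp hτbar_state hτbar_perm
    · -- the trace value is unchanged
      have key : ((bipartitePow ρ n) * ((1 : Matrix _ _ ℂ) - T')).trace
          = ((bipartitePow ρ n) * ((1 : Matrix _ _ ℂ) - T)).trace := by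
        rw [hsub, Matrix.mul_smul, Matrix.trace_smul, Matrix.mul_sum, Matrix.trace_sum]
        have step : ∀ π : G, ((bipartitePow ρ n) * ((1 - T).submatrix (pAB π) (pAB π))).trace
            = ((bipartitePow ρ n) * (1 - T)).trace := fun π => by
          rw [aux_trace_mul_submatrix, pAB_symm, bipartitePow_submatrix]
        rw [Finset.sum_congr rfl fun π _ => step π, Finset.sum_const, Finset.card_univ]
        rw [← hN, nsmul_eq_mul, smul_eq_mul, ← mul_assoc, hcN, one_mul]
      rw [hr, key]
  · -- easy direction: a test for the larger alternative works for the smaller one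
    rintro ⟨T, hT, hcon, hr⟩
    exact ⟨T, hT, fun σ τ hσ hσp hτ _ => hcon σ τ hσ hσp hτ, hr⟩

end QIT
end

section
/- Let p ∈ (1/2, 1) and let ρ_{AB} = p|0,0⟩⟨0,0| + (1−p)|1,1⟩⟨1,1| be a classically correlated two-qubit state. Then for every n ≥ 1 and every μ ∈ [0,1], the minimum type-I error α̂ₙ^{ind}(μ) with alternative hypothesis all product states σ_{A^n} ⊗ τ_{B^n} equals exactly 1 − μ. -/
open scoped BigOperators ComplexOrder

namespace QIT

variable {α β : Type*} [Fintype α] [DecidableEq α] [Fintype β] [DecidableEq β]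

/-- Minimum type-I error with alternative hypothesis
`{σ ⊗ τ : σ ∈ S(Aⁿ), τ ∈ S(Bⁿ)}` (all product states across the `Aⁿ : Bⁿ` cut). -/
noncomputable def alphaHatInd (ρ : Matrix (α × β) (α × β) ℂ) (n : ℕ) (μ : ℝ) : ℝ :=
  sInf {r : ℝ |
    ∃ T : Matrix ((Fin n → α) × (Fin n → β)) ((Fin n → α) × (Fin n → β)) ℂ,
      IsTest T ∧
      (∀ (σ : Matrix (Fin n → α) (Fin n → α) ℂ) (τ : Matrix (Fin n → β) (Fin n → β) ℂ),
        IsState σ → IsState τ → ((prodMat σ τ) * T).trace.re ≤ μ) ∧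
      r = ((bipartitePow ρ n) * (1 - T)).trace.re}

/-- trace of a tensor product factorizes -/
lemma trace_prodMat (σ : Matrix α α ℂ) (τ : Matrix β β ℂ) :
    (prodMat σ τ).trace = σ.trace * τ.trace := by
  simp [Matrix.trace, prodMat, Matrix.diag, Fintype.sum_prod_type, Finset.sum_mul_sum]

/-- the projector onto a basis vector is a state -/
lemma isState_stdBasis {γ : Type*} [Fintype γ] [DecidableEq γ] [Nonempty γ] (s : γ) :
    IsState (Matrix.single s s (1 : ℂ)) := by
  constructor
  · have h : Matrix.single s s (1 : ℂ)
        = Matrix.diagonal (fun x => if s = x then 1 else 0) := by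
      ext a b
      simp only [Matrix.single, Matrix.diagonal, Matrix.of_apply]
      split_ifs <;> aesop
    rw [h, Matrix.posSemidef_diagonal_iff]
    intro i
    split_ifs <;> norm_num
  · simp [Matrix.trace, Matrix.diag, Matrix.single]

lemma trace_proj_mul {γ δ : Type*} [Fintype γ] [DecidableEq γ] [Fintype δ] [DecidableEq δ]
    (s : γ) (t : δ) (M : Matrix (γ × δ) (γ × δ) ℂ) :
    (prodMat (Matrix.single s s (1 : ℂ)) (Matrix.single t t (1 : ℂ)) * M).trace
      = M (s, t) (s, t) := by
  have h : ∀ (a c : γ) (b d : δ), Matrix.single s s (1:ℂ) a c * Matrix.single t t (1:ℂ) b d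
      = if s = a ∧ t = b ∧ s = c ∧ t = d then 1 else 0 := by
    intro a c b d
    simp only [Matrix.single, Matrix.of_apply]
    split_ifs <;> aesop
  simp only [Matrix.trace, Matrix.diag, Matrix.mul_apply, prodMat]
  simp only [Fintype.sum_prod_type]
  simp [h, ite_and]

/-- For `p ∈ (1/2, 1)` and the classically correlated two-qubit state
`ρ = p |0,0⟩⟨0,0| + (1−p) |1,1⟩⟨1,1|`, one has `α̂ₙ^{ind}(μ) = 1 − μ` for every
`n ≥ 1` and `μ ∈ [0, 1]`. -/
theorem alphaHatInd_cc_state (p : ℝ) (hp : p ∈ Set.Ioo (1/2 : ℝ) 1)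
    (ρ : Matrix (Fin 2 × Fin 2) (Fin 2 × Fin 2) ℂ)
    (hρ : ρ = (p : ℂ) • Matrix.single ((0 : Fin 2), (0 : Fin 2))
        ((0 : Fin 2), (0 : Fin 2)) 1
      + ((1 - p : ℝ) : ℂ) • Matrix.single ((1 : Fin 2), (1 : Fin 2))
        ((1 : Fin 2), (1 : Fin 2)) 1)
    (n : ℕ) (hn : 1 ≤ n) (μ : ℝ) (hμ : μ ∈ Set.Icc (0 : ℝ) 1) :
    alphaHatInd ρ n μ = 1 - μ := by
  obtain ⟨hp1, hp2⟩ := hp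
  obtain ⟨hμ0, hμ1⟩ := hμ
  set f : Fin 2 → ℝ := fun j => if j = 0 then p else 1 - p with hf
  have hf0 : ∀ j, 0 ≤ f j := by
    intro j; simp only [hf]; split_ifs <;> nlinarith
  have hfsum : f 0 + f 1 = 1 := by norm_num [hf]
  set w : (Fin n → Fin 2) → ℝ := fun s => ∏ i, f (s i) with hw
  have hw0 : ∀ s, 0 ≤ w s := fun s => Finset.prod_nonneg fun i _ => hf0 _
  have hwsum : ∑ s : Fin n → Fin 2, w s = 1 := by
    rw [show (∑ s : Fin n → Fin 2, w s) = ∑ s ∈ Fintype.piFinset (fun _ : Fin n => Finset.univ),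
        ∏ i, f (s i) by rw [Fintype.piFinset_univ]]
    rw [← Finset.prod_univ_sum]
    simp [Fin.sum_univ_two, hfsum]
  -- entries of ρ
  have hent : ∀ a b c d : Fin 2, ρ (a, b) (c, d)
      = if b = a ∧ c = a ∧ d = a then ((f a : ℝ) : ℂ) else 0 := by
    intro a b c d
    subst hρ
    fin_cases a <;> fin_cases b <;> fin_cases c <;> fin_cases d <;>
      simp [Matrix.single, hf, Prod.ext_iff]
  have hB : ∀ x y : (Fin n → Fin 2) × (Fin n → Fin 2), bipartitePow ρ n x y
      = if x.2 = x.1 ∧ y.1 = x.1 ∧ y.2 = x.1 then ((w x.1 : ℝ) : ℂ) else 0 := by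
    intro x y
    show (∏ i, ρ (x.1 i, x.2 i) (y.1 i, y.2 i)) = _
    by_cases h : x.2 = x.1 ∧ y.1 = x.1 ∧ y.2 = x.1
    · obtain ⟨h1, h2, h3⟩ := h
      rw [if_pos ⟨h1, h2, h3⟩, hw]
      push_cast
      refine Finset.prod_congr rfl fun i _ => ?_
      rw [hent, if_pos ⟨congrFun h1 i, congrFun h2 i, congrFun h3 i⟩]
    · rw [if_neg h]
      have hne : ¬ ∀ i, x.2 i = x.1 i ∧ y.1 i = x.1 i ∧ y.2 i = x.1 i := by
        intro hall
        exact h ⟨funext fun i => (hall i).1, funext fun i => (hall i).2.1,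
          funext fun i => (hall i).2.2⟩
      obtain ⟨i, hi⟩ := not_forall.mp hne
      refine Finset.prod_eq_zero (Finset.mem_univ i) ?_
      rw [hent, if_neg hi]
  -- the trace formula
  have htr : ∀ M : Matrix ((Fin n → Fin 2) × (Fin n → Fin 2))
      ((Fin n → Fin 2) × (Fin n → Fin 2)) ℂ,
      ((bipartitePow ρ n) * M).trace = ∑ s : Fin n → Fin 2, ((w s : ℝ) : ℂ) * M (s, s) (s, s) := by
    intro M
    simp only [Matrix.trace, Matrix.diag, Matrix.mul_apply, Fintype.sum_prod_type]
    simp [hB, ite_and]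
  have htrB : (bipartitePow ρ n).trace = 1 := by
    have := htr 1
    rw [mul_one] at this
    rw [this]
    simp only [Matrix.one_apply_eq, mul_one]
    rw [← Complex.ofReal_sum, hwsum, Complex.ofReal_one]
  -- membership of 1 - μ
  have hmem : (1 - μ) ∈ {r : ℝ |
    ∃ T : Matrix ((Fin n → Fin 2) × (Fin n → Fin 2)) ((Fin n → Fin 2) × (Fin n → Fin 2)) ℂ,
      IsTest T ∧
      (∀ (σ : Matrix (Fin n → Fin 2) (Fin n → Fin 2) ℂ)
         (τ : Matrix (Fin n → Fin 2) (Fin n → Fin 2) ℂ),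
        IsState σ → IsState τ → ((prodMat σ τ) * T).trace.re ≤ μ) ∧
      (1 - μ) = ((bipartitePow ρ n) * (1 - T)).trace.re} := by
    refine ⟨(μ : ℂ) • 1, ⟨?_, ?_⟩, ?_, ?_⟩
    · have h1 : ((μ : ℂ) • (1 : Matrix ((Fin n → Fin 2) × (Fin n → Fin 2))
          ((Fin n → Fin 2) × (Fin n → Fin 2)) ℂ))
          = Matrix.diagonal (fun _ => (μ : ℂ)) := by
        ext x y
        by_cases h : x = y <;> simp [Matrix.one_apply, Matrix.diagonal, h]
      rw [h1, Matrix.posSemidef_diagonal_iff]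
      intro _
      exact_mod_cast hμ0
    · have h1 : ((1 : Matrix ((Fin n → Fin 2) × (Fin n → Fin 2))
          ((Fin n → Fin 2) × (Fin n → Fin 2)) ℂ) - (μ : ℂ) • 1)
          = Matrix.diagonal (fun _ => ((1 - μ : ℝ) : ℂ)) := by
        ext x y
        by_cases h : x = y <;>
          simp [Matrix.one_apply, Matrix.diagonal, Matrix.sub_apply, h] <;> push_cast <;> ring
      rw [h1, Matrix.posSemidef_diagonal_iff]
      intro _
      have : (0:ℝ) ≤ 1 - μ := by linarith
      exact_mod_cast this
    · intro σ τ hσ hτ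
      rw [Matrix.mul_smul, mul_one, Matrix.trace_smul, trace_prodMat, hσ.2, hτ.2, mul_one]
      simp
    · rw [Matrix.mul_sub, mul_one, Matrix.trace_sub, Matrix.mul_smul, mul_one,
        Matrix.trace_smul, htrB]
      simp
  -- lower bound
  have hlb : ∀ r ∈ {r : ℝ |
    ∃ T : Matrix ((Fin n → Fin 2) × (Fin n → Fin 2)) ((Fin n → Fin 2) × (Fin n → Fin 2)) ℂ,
      IsTest T ∧
      (∀ (σ : Matrix (Fin n → Fin 2) (Fin n → Fin 2) ℂ)
         (τ : Matrix (Fin n → Fin 2) (Fin n → Fin 2) ℂ),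
        IsState σ → IsState τ → ((prodMat σ τ) * T).trace.re ≤ μ) ∧
      r = ((bipartitePow ρ n) * (1 - T)).trace.re}, 1 - μ ≤ r := by
    rintro r ⟨T, hT, hcon, rfl⟩
    have hTs : ∀ s : Fin n → Fin 2, (T (s, s) (s, s)).re ≤ μ := by
      intro s
      have h := hcon (Matrix.single s s 1) (Matrix.single s s 1)
        (isState_stdBasis s) (isState_stdBasis s)
      rwa [trace_proj_mul] at h
    rw [Matrix.mul_sub, mul_one, Matrix.trace_sub, htr T, htrB]
    have hre : (∑ s : Fin n → Fin 2, ((w s : ℝ) : ℂ) * T (s, s) (s, s)).re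
        = ∑ s : Fin n → Fin 2, w s * (T (s, s) (s, s)).re := by
      rw [Complex.re_sum]
      exact Finset.sum_congr rfl fun s _ => Complex.re_ofReal_mul _ _
    simp only [Complex.sub_re, Complex.one_re, hre]
    have hb : ∑ s : Fin n → Fin 2, w s * (T (s, s) (s, s)).re
        ≤ ∑ s : Fin n → Fin 2, w s * μ :=
      Finset.sum_le_sum fun s _ => mul_le_mul_of_nonneg_left (hTs s) (hw0 s)
    rw [← Finset.sum_mul, hwsum, one_mul] at hb
    linarith
  unfold alphaHatInd
  exact le_antisymm (csInf_le ⟨1 - μ, hlb⟩ hmem) (le_csInf ⟨1 - μ, hmem⟩ hlb)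

end QIT
end

section
/- Let P_{XY} be a PMF on a finite set X × Y, embedded as a classical-classical quantum state ρ_{AB} = Σ_{x,y} P_{XY}(x,y)|a_x,b_y⟩⟨a_x,b_y| for orthonormal bases {a_x}, {b_y}. Suppose the quantum alternative hypothesis H₁^{q,n} ⊆ S(A^nB^n) is closed under pinching in the product basis, and let H₁^{c,n} be the set of diagonal distributions of members of H₁^{q,n}. Then the quantum minimum type-I error equals the classical minimum type-I error: α̂ₙ^q(μ) = α̂ₙ^c(μ) for all μ ∈ [0,∞). -/
open scoped BigOperators ComplexOrder

namespace QIT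

variable {α β : Type*} [Fintype α] [DecidableEq α] [Fintype β] [DecidableEq β]

private lemma diag_nonneg' {m : Type*} [Fintype m] [DecidableEq m] {A : Matrix m m ℂ}
    (hA : A.PosSemidef) (i : m) : 0 ≤ A i i := by
  exact hA.diag_nonneg

private lemma trace_diagonal_mul' {m : Type*} [Fintype m] [DecidableEq m] (d : m → ℂ)
    (M : Matrix m m ℂ) : (Matrix.diagonal d * M).trace = ∑ x, d x * M x x := by
  simp [Matrix.trace, Matrix.diag, Matrix.diagonal_mul]

private lemma trace_mul_diagonal' {m : Type*} [Fintype m] [DecidableEq m] (d : m → ℂ)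
    (M : Matrix m m ℂ) : (M * Matrix.diagonal d).trace = ∑ x, M x x * d x := by
  simp [Matrix.trace, Matrix.diag, Matrix.mul_diagonal]

/-- For a PMF `P` on `X × Y` embedded as the classical-classical (diagonal)
quantum state `ρ = Σ_{x,y} P(x,y) |a_x, b_y⟩⟨a_x, b_y|`, if the quantum
alternative hypothesis `H ⊆ S(AⁿBⁿ)` is closed under pinching in the product
basis, then the quantum minimum type-I error equals the classical minimum
type-I error with classical alternative hypothesis given by the diagonal
distributions of members of `H`: `α̂ₙ^q(μ) = α̂ₙ^c(μ)` for all `μ ∈ [0, ∞)`. -/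
theorem quantum_eq_classical_typeI {X Y : Type*}
    [Fintype X] [DecidableEq X] [Fintype Y] [DecidableEq Y]
    (P : X × Y → ℝ) (hP0 : ∀ z, 0 ≤ P z) (hP1 : ∑ z, P z = 1)
    (n : ℕ) (hn : 1 ≤ n)
    (H : Set (Matrix ((Fin n → X) × (Fin n → Y)) ((Fin n → X) × (Fin n → Y)) ℂ))
    (hHne : H.Nonempty)
    (hHstate : ∀ σ ∈ H, IsState σ)
    (hHpinch : ∀ σ ∈ H, Matrix.diagonal (fun x => σ x x) ∈ H)
    (μ : ℝ) (hμ : 0 ≤ μ) :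
    sInf {r : ℝ |
        ∃ T : Matrix ((Fin n → X) × (Fin n → Y)) ((Fin n → X) × (Fin n → Y)) ℂ,
          IsTest T ∧ (∀ σ ∈ H, (σ * T).trace.re ≤ μ) ∧
          r = ((Matrix.diagonal
              (fun x : (Fin n → X) × (Fin n → Y) =>
                ((∏ i, P (x.1 i, x.2 i) : ℝ) : ℂ))) * (1 - T)).trace.re}
      = sInf {r : ℝ |
        ∃ T : ((Fin n → X) × (Fin n → Y)) → ℝ,
          (∀ x, T x ∈ Set.Icc (0 : ℝ) 1) ∧
          (∀ Q : ((Fin n → X) × (Fin n → Y)) → ℝ,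
            (∃ σ ∈ H, ∀ x, Q x = (σ x x).re) → ∑ x, Q x * T x ≤ μ) ∧
          r = ∑ x : (Fin n → X) × (Fin n → Y),
            (∏ i, P (x.1 i, x.2 i)) * (1 - T x)} := by
  congr 1
  ext r
  constructor
  · rintro ⟨T, ⟨hT0, hT1⟩, hμc, rfl⟩
    refine ⟨fun x => (T x x).re, ?_, ?_, ?_⟩
    · intro x
      have h0 := diag_nonneg' hT0 x
      have h1 := diag_nonneg' hT1 x
      rw [Complex.nonneg_iff] at h0 h1
      constructor
      · exact h0.1
      · have : ((1 - T) x x).re = 1 - (T x x).re := by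
          simp [Matrix.sub_apply, Matrix.one_apply]
        linarith [h1.1, this ▸ h1.1]
    · rintro Q ⟨σ, hσH, hQ⟩
      have hσ' := hHpinch σ hσH
      have hle := hμc _ hσ'
      have hσreal : ∀ x, (σ x x).im = 0 := fun x => by
        have := diag_nonneg' (hHstate σ hσH).1 x
        rw [Complex.nonneg_iff] at this; exact this.2.symm
      have htr : ((Matrix.diagonal (fun x => σ x x) * T).trace).re
          = ∑ x, Q x * (T x x).re := by
        rw [trace_diagonal_mul', Complex.re_sum]
        refine Finset.sum_congr rfl fun x _ => ?_
        rw [Complex.mul_re, hσreal x, hQ x]; ring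
      linarith [htr ▸ hle]
    · rw [trace_diagonal_mul', Complex.re_sum]
      refine Finset.sum_congr rfl fun x _ => ?_
      have : ((1 - T) x x) = 1 - T x x := by simp [Matrix.sub_apply, Matrix.one_apply]
      rw [this, Complex.mul_re]
      simp only [Complex.sub_re, Complex.sub_im, Complex.one_re, Complex.one_im,
        ← Complex.ofReal_prod, Complex.ofReal_re, Complex.ofReal_im]
      ring
  · rintro ⟨T, hT01, hμc, rfl⟩
    refine ⟨Matrix.diagonal (fun x => (T x : ℂ)), ⟨?_, ?_⟩, ?_, ?_⟩
    · exact Matrix.PosSemidef.diagonal fun x => show (0:ℂ) ≤ _ by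
        rw [Complex.nonneg_iff]; exact ⟨by simpa using (hT01 x).1, by simp⟩
    · have : (1 : Matrix _ _ ℂ) - Matrix.diagonal (fun x => (T x : ℂ))
          = Matrix.diagonal (fun x => ((1 - T x : ℝ) : ℂ)) := by
        ext i j
        by_cases h : i = j <;>
          simp [Matrix.one_apply, Matrix.diagonal_apply, Matrix.sub_apply, h]
      rw [this]
      exact Matrix.PosSemidef.diagonal fun x => show (0:ℂ) ≤ _ by
        rw [Complex.nonneg_iff]
        exact ⟨by simpa using sub_nonneg.mpr (hT01 x).2, by simp⟩
    · intro σ hσH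
      have hσreal : ∀ x, (σ x x).im = 0 := fun x => by
        have := diag_nonneg' (hHstate σ hσH).1 x
        rw [Complex.nonneg_iff] at this; exact this.2.symm
      have hle := hμc (fun x => (σ x x).re) ⟨σ, hσH, fun _ => rfl⟩
      have htr : ((σ * Matrix.diagonal (fun x => (T x : ℂ))).trace).re
          = ∑ x, (σ x x).re * T x := by
        rw [trace_mul_diagonal', Complex.re_sum]
        refine Finset.sum_congr rfl fun x _ => ?_
        rw [Complex.mul_re]; simp
      linarith [htr ▸ hle]
    · have : (1 : Matrix _ _ ℂ) - Matrix.diagonal (fun x => (T x : ℂ))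
          = Matrix.diagonal (fun x => ((1 - T x : ℝ) : ℂ)) := by
        ext i j
        by_cases h : i = j <;>
          simp [Matrix.one_apply, Matrix.diagonal_apply, Matrix.sub_apply, h]
      rw [this, trace_diagonal_mul', Complex.re_sum]
      refine Finset.sum_congr rfl fun x _ => ?_
      rw [Matrix.diagonal_apply_eq, Complex.mul_re]
      simp only [← Complex.ofReal_prod, Complex.ofReal_re, Complex.ofReal_im]
      ring


end QIT
end
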